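/- Let u ∈ C²[a,b], 0 < γ < 1, and let I₁(a,b,x_i) be the value obtained by replacing u in I(a,b,x_i) = ∫ₐᵇ u(y)/|x_i − y|^γ dy by its piecewise linear interpolant on a uniform grid of step h. Then |I(a,b,x_i) − I₁(a,b,x_i)| ≤ C h² for a constant C depending only on ‖u″‖_∞, γ, and b−a. -/

import Mathlib

open Set MeasureTheory intervalIntegral

lemma aux_abs_rpow_int {r : ℝ} (hr : -1 < r) (a b : ℝ) :
    IntervalIntegrable (fun s : ℝ => |s| ^ r) volume a b := by
  have key : ∀ c : ℝ, 0 ≤ c → IntervalIntegrable (fun s : ℝ => |s| ^ r) volume 0 c := by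
    intro c hc
    rw [intervalIntegrable_iff]
    have h1 := (intervalIntegrable_rpow' (a := 0) (b := c) hr)
    rw [intervalIntegrable_iff] at h1
    refine h1.congr_fun ?_ measurableSet_uIoc
    intro x hx
    rw [uIoc_of_le hc] at hx
    simp only []
    rw [abs_of_pos hx.1]
  have key2 : ∀ c : ℝ, IntervalIntegrable (fun s : ℝ => |s| ^ r) volume 0 c := by
    intro c
    rcases le_total 0 c with hc | hc
    · exact key c hc
    · have h := key (-c) (by linarith)
      have := (IntervalIntegrable.iff_comp_neg (f := fun s : ℝ => |s| ^ r)
        (a := 0) (b := c)).2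
      simp only [abs_neg, neg_zero] at this ⊢
      exact this h
  exact (key2 a).symm.trans (key2 b)

lemma aux_ker_int {r : ℝ} (hr : -1 < r) (c a b : ℝ) :
    IntervalIntegrable (fun y : ℝ => |c - y| ^ r) volume a b := by
  have h := (aux_abs_rpow_int hr (c - a) (c - b)).comp_sub_left c
  simpa using h

lemma aux_taylor {a b : ℝ} {u f' f'' : ℝ → ℝ} {M : ℝ}
    (hd1 : ∀ x ∈ Icc a b, HasDerivWithinAt u (f' x) (Icc a b) x)
    (hd2 : ∀ x ∈ Icc a b, HasDerivWithinAt f' (f'' x) (Icc a b) x)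
    (hM : ∀ x ∈ Icc a b, |f'' x| ≤ M)
    {p y : ℝ} (hp : p ∈ Icc a b) (hy : y ∈ Icc a b) :
    |u p - u y - f' y * (p - y)| ≤ M * (p - y) ^ 2 := by
  -- MVT for f'
  have lip : ∀ s ∈ Icc a b, ∀ t ∈ Icc a b, |f' s - f' t| ≤ M * |s - t| := by
    intro s hs t ht
    have := (convex_Icc a b).norm_image_sub_le_of_norm_hasDerivWithin_le hd2
      (fun x hx => by simpa using hM x hx) ht hs
    simpa [Real.norm_eq_abs] using this
  set g : ℝ → ℝ := fun t => u t - u y - f' y * (t - y) with hg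
  have hsub : uIcc y p ⊆ Icc a b := (ordConnected_Icc).uIcc_subset hy hp
  have hgd : ∀ t ∈ uIcc y p, HasDerivWithinAt g (f' t - f' y) (uIcc y p) t := by
    intro t ht
    have h1 : HasDerivWithinAt u (f' t) (uIcc y p) t := (hd1 t (hsub ht)).mono hsub
    have h2 : HasDerivWithinAt (fun t : ℝ => u y + f' y * (t - y)) (f' y) (uIcc y p) t := by
      have : HasDerivWithinAt (fun t : ℝ => t - y) 1 (uIcc y p) t :=
        (hasDerivWithinAt_id t _).sub_const y
      simpa using (this.const_mul (f' y)).const_add (u y)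
    have := h1.sub h2
    rw [show g = u - fun t : ℝ => u y + f' y * (t - y) from ?_]
    · exact this
    · ext t; simp [hg]; ring
  have hbound : ∀ t ∈ uIcc y p, ‖f' t - f' y‖ ≤ M * |p - y| := by
    intro t ht
    have h1 : |f' t - f' y| ≤ M * |t - y| := lip t (hsub ht) y hy
    have h2 : |t - y| ≤ |p - y| := by
      rcases le_total y p with hyp | hyp
      · rw [uIcc_of_le hyp] at ht
        rw [abs_of_nonneg (by linarith [ht.1]), abs_of_nonneg (by linarith)]
        linarith [ht.2]
      · rw [uIcc_of_ge hyp] at ht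
        rw [abs_of_nonpos (by linarith [ht.2]), abs_of_nonpos (by linarith)]
        linarith [ht.1]
    have hM0 : 0 ≤ M := le_trans (abs_nonneg _) (hM y hy)
    calc ‖f' t - f' y‖ = |f' t - f' y| := rfl
      _ ≤ M * |t - y| := h1
      _ ≤ M * |p - y| := by nlinarith
  have := (convex_uIcc y p).norm_image_sub_le_of_norm_hasDerivWithin_le hgd hbound
    (left_mem_uIcc) (right_mem_uIcc)
  have hgy : g y = 0 := by simp [hg]
  rw [hgy, sub_zero] at this
  calc |u p - u y - f' y * (p - y)| = ‖g p‖ := rfl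
    _ ≤ M * |p - y| * ‖p - y‖ := this
    _ = M * (p - y) ^ 2 := by rw [Real.norm_eq_abs, mul_assoc, abs_mul_abs_self, sq]
      
-- interpolation error bound

lemma aux_interp {a b : ℝ} {u f' f'' : ℝ → ℝ} {M : ℝ}
    (hd1 : ∀ x ∈ Icc a b, HasDerivWithinAt u (f' x) (Icc a b) x)
    (hd2 : ∀ x ∈ Icc a b, HasDerivWithinAt f' (f'' x) (Icc a b) x)
    (hM : ∀ x ∈ Icc a b, |f'' x| ≤ M)
    {p q y : ℝ} (hpq : p < q) (hp : p ∈ Icc a b) (hq : q ∈ Icc a b)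
    (hy : y ∈ Icc p q) :
    |u p * (q - y) / (q - p) + u q * (y - p) / (q - p) - u y| ≤ M * (q - p) ^ 2 := by
  have hy' : y ∈ Icc a b := ⟨le_trans hp.1 hy.1, le_trans hy.2 hq.2⟩
  have h := q - p
  have hh : 0 < q - p := by linarith
  have hM0 : 0 ≤ M := le_trans (abs_nonneg _) (hM y hy')
  set lam := (q - y) / (q - p) with hlam
  set mu := (y - p) / (q - p) with hmu
  have hlam0 : 0 ≤ lam := div_nonneg (by linarith [hy.2]) hh.le
  have hmu0 : 0 ≤ mu := div_nonneg (by linarith [hy.1]) hh.le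
  have hsum : lam + mu = 1 := by rw [hlam, hmu]; field_simp; ring
  have hzero : lam * (p - y) + mu * (q - y) = 0 := by
    field_simp [hlam, hmu]; ring
  have e1 := aux_taylor hd1 hd2 hM hp hy'
  have e2 := aux_taylor hd1 hd2 hM hq hy'
  have key : u p * (q - y) / (q - p) + u q * (y - p) / (q - p) - u y
      = lam * (u p - u y - f' y * (p - y)) + mu * (u q - u y - f' y * (q - y)) := by
    have : lam * (u p - u y - f' y * (p - y)) + mu * (u q - u y - f' y * (q - y))
        = lam * u p + mu * u q - (lam + mu) * u y - f' y * (lam * (p - y) + mu * (q - y)) := by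
      ring
    rw [this, hsum, hzero]
    rw [hlam, hmu]; ring
  rw [key]
  have b1 : (p - y) ^ 2 ≤ (q - p) ^ 2 := by nlinarith [hy.1, hy.2]
  have b2 : (q - y) ^ 2 ≤ (q - p) ^ 2 := by nlinarith [hy.1, hy.2]
  calc |lam * (u p - u y - f' y * (p - y)) + mu * (u q - u y - f' y * (q - y))|
      ≤ lam * |u p - u y - f' y * (p - y)| + mu * |u q - u y - f' y * (q - y)| := by
        refine (abs_add_le _ _).trans ?_
        rw [abs_mul, abs_mul, abs_of_nonneg hlam0, abs_of_nonneg hmu0]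
    _ ≤ lam * (M * (q - p) ^ 2) + mu * (M * (q - p) ^ 2) := by
        gcongr
        · exact e1.trans (by nlinarith)
        · exact e2.trans (by nlinarith)
    _ = M * (q - p) ^ 2 := by rw [← add_mul, hsum, one_mul]

/-- Second-order local truncation error of piecewise linear collocation for the
weakly singular integral `∫ₐᵇ u(y)/|xᵢ − y|^γ dy`. -/
theorem stmt_16 (γ a b : ℝ) (hγ0 : 0 < γ) (hγ1 : γ < 1) (hab : a < b)
    (u : ℝ → ℝ) (hu : ContDiffOn ℝ 2 u (Set.Icc a b)) :
    ∃ C > 0, ∀ (N : ℕ) (hN : 1 ≤ N) (i : ℕ) (hi1 : 1 ≤ i) (hiN : i ≤ N - 1)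
      (uL : ℝ → ℝ),
      (∀ m : ℕ, m < N → ∀ y ∈ Set.Icc (a + m * ((b - a) / N)) (a + (m + 1) * ((b - a) / N)),
        uL y = u (a + m * ((b - a) / N)) * ((a + (m + 1) * ((b - a) / N)) - y) / ((b - a) / N)
             + u (a + (m + 1) * ((b - a) / N)) * (y - (a + m * ((b - a) / N))) / ((b - a) / N)) →
      |(∫ y in a..b, u y / |(a + i * ((b - a) / N)) - y| ^ γ)
          - ∫ y in a..b, uL y / |(a + i * ((b - a) / N)) - y| ^ γ|
        ≤ C * ((b - a) / N) ^ 2 := by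
  -- derivative setup
  have hUD : UniqueDiffOn ℝ (Icc a b) := uniqueDiffOn_Icc hab
  have hud : DifferentiableOn ℝ u (Icc a b) := hu.differentiableOn (by norm_num)
  set f' := derivWithin u (Icc a b) with hf'
  have hu' : ContDiffOn ℝ 1 f' (Icc a b) := hu.derivWithin hUD (by norm_num)
  set f'' := derivWithin f' (Icc a b) with hf''
  have hd1 : ∀ x ∈ Icc a b, HasDerivWithinAt u (f' x) (Icc a b) x :=
    fun x hx => (hud x hx).hasDerivWithinAt
  have hd2 : ∀ x ∈ Icc a b, HasDerivWithinAt f' (f'' x) (Icc a b) x :=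
    fun x hx => ((hu'.differentiableOn (by norm_num)) x hx).hasDerivWithinAt
  have hcont'' : ContinuousOn f'' (Icc a b) :=
    hu'.continuousOn_derivWithin hUD le_rfl
  obtain ⟨M0, hM0⟩ := (isCompact_Icc).exists_bound_of_continuousOn hcont''
  set M := max M0 0 with hMdef
  have hMnn : 0 ≤ M := le_max_right _ _
  have hM : ∀ x ∈ Icc a b, |f'' x| ≤ M := fun x hx => (hM0 x hx).trans (le_max_left _ _)
  -- kernel constant
  have hrγ : (-1 : ℝ) < -γ := by linarith
  set d := b - a with hd
  have hd0 : 0 < d := by simp [hd]; linarith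
  set W := ∫ s in (-d)..d, |s| ^ (-γ) with hW
  have hWnn : 0 ≤ W :=
    intervalIntegral.integral_nonneg (by linarith)
      (fun s _ => Real.rpow_nonneg (abs_nonneg _) _)
  refine ⟨(M + 1) * (W + 1), by positivity, ?_⟩
  intro N hN i hi1 hiN uL huL
  have hN0 : (0 : ℝ) < N := by exact_mod_cast hN
  set h := (b - a) / N with hh
  have hh0 : 0 < h := by positivity
  set X : ℕ → ℝ := fun m => a + m * h with hX
  set c := a + i * h with hc
  have hcX : c = X i := rfl
  have hX0 : X 0 = a := by simp [hX]
  have hXN : X N = b := by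
    simp only [hX, hh]
    field_simp
    ring
  have hstep : ∀ m : ℕ, X (m + 1) - X m = h := by
    intro m; simp only [hX]; push_cast; ring
  have hXlt : ∀ m : ℕ, X m < X (m + 1) := by
    intro m; have := hstep m; linarith
  have hXmem : ∀ m : ℕ, m ≤ N → X m ∈ Icc a b := by
    intro m hm
    have h1 : (m : ℝ) ≤ N := by exact_mod_cast hm
    constructor
    · simp only [hX]; nlinarith
    · simp only [hX, hh]
      have : (m : ℝ) * ((b - a) / N) ≤ N * ((b - a) / N) := by
        apply mul_le_mul_of_nonneg_right h1; positivity
      have hNe : (N : ℝ) * ((b - a) / N) = b - a := by field_simp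
      linarith
  have hci : c ∈ Icc a b := by
    rw [hcX]; exact hXmem i (le_trans hiN (Nat.sub_le N 1))
  -- kernel
  set K : ℝ → ℝ := fun y => |c - y| ^ (-γ) with hK
  have hKnn : ∀ y, 0 ≤ K y := fun y => Real.rpow_nonneg (abs_nonneg _) _
  have hKint : ∀ p q : ℝ, IntervalIntegrable K volume p q := fun p q => aux_ker_int hrγ c p q
  -- rewrite the integrands
  have hker_eq : ∀ v : ℝ → ℝ, (∫ y in a..b, v y / |c - y| ^ γ) = ∫ y in a..b, v y * K y := by
    intro v
    apply intervalIntegral.integral_congr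
    intro y _
    rw [hK]
    simp only []
    rw [Real.rpow_neg (abs_nonneg _), div_eq_mul_inv]
  rw [hker_eq u, hker_eq uL]
  -- per-piece data
  set A : ℕ → ℝ → ℝ := fun m y => u (X m) * (X (m + 1) - y) / h + u (X (m + 1)) * (y - X m) / h
    with hA
  have hAcont : ∀ m, Continuous (A m) := by
    intro m; simp only [hA]; fun_prop
  have hsub : ∀ m : ℕ, m < N → Icc (X m) (X (m + 1)) ⊆ Icc a b := by
    intro m hm
    exact Icc_subset_Icc (hXmem m (le_of_lt hm)).1 (hXmem (m + 1) hm).2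
  have huLeq : ∀ m : ℕ, m < N → ∀ y ∈ Icc (X m) (X (m + 1)), uL y = A m y := by
    intro m hm y hy
    have := huL m hm y (by
      convert hy using 3 <;> push_cast [hX, hh] <;> ring)
    rw [this]
    simp only [hA, hX, hh]
    push_cast; ring
  have hII_u : ∀ m : ℕ, m < N →
      IntervalIntegrable (fun y => u y * K y) volume (X m) (X (m + 1)) := by
    intro m hm
    refine (hKint _ _).continuousOn_mul ?_
    refine hu.continuousOn.mono ?_
    rw [uIcc_of_le (hXlt m).le]
    exact hsub m hm
  have hII_A : ∀ m : ℕ,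
      IntervalIntegrable (fun y => A m y * K y) volume (X m) (X (m + 1)) := by
    intro m
    exact (hKint _ _).continuousOn_mul (hAcont m).continuousOn
  have hII_uL : ∀ m : ℕ, m < N →
      IntervalIntegrable (fun y => uL y * K y) volume (X m) (X (m + 1)) := by
    intro m hm
    rw [intervalIntegrable_iff]
    have := hII_A m
    rw [intervalIntegrable_iff] at this
    refine this.congr_fun ?_ measurableSet_uIoc
    intro y hy
    rw [uIoc_of_le (hXlt m).le] at hy
    have : uL y = A m y := huLeq m hm y (Ioc_subset_Icc_self hy)
    simp only [this]
  have heq_int : ∀ m : ℕ, m < N →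
      (∫ y in X m..X (m + 1), uL y * K y) = ∫ y in X m..X (m + 1), A m y * K y := by
    intro m hm
    apply intervalIntegral.integral_congr
    intro y hy
    rw [uIcc_of_le (hXlt m).le] at hy
    show uL y * K y = A m y * K y
    rw [huLeq m hm y hy]
  -- per piece bound
  have hpiece : ∀ m : ℕ, m < N →
      |(∫ y in X m..X (m + 1), u y * K y) - ∫ y in X m..X (m + 1), uL y * K y|
        ≤ M * h ^ 2 * ∫ y in X m..X (m + 1), K y := by
    intro m hm
    rw [heq_int m hm]
    rw [← intervalIntegral.integral_sub (hII_u m hm) (hII_A m)]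
    have habs : |∫ y in X m..X (m + 1), (u y * K y - A m y * K y)|
        ≤ ∫ y in X m..X (m + 1), |u y * K y - A m y * K y| :=
      intervalIntegral.abs_integral_le_integral_abs (hXlt m).le
    refine habs.trans ?_
    rw [← intervalIntegral.integral_const_mul]
    apply intervalIntegral.integral_mono_on (hXlt m).le
    · exact ((hII_u m hm).sub (hII_A m)).abs
    · exact (hKint _ _).const_mul _
    · intro y hy
      have hyab : y ∈ Icc a b := hsub m hm hy
      have hinterp := aux_interp hd1 hd2 hM (hXlt m) (hXmem m hm.le)
        (hXmem (m + 1) hm) hy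
      rw [hstep m] at hinterp
      have : |u y * K y - A m y * K y| = |u y - A m y| * K y := by
        rw [← sub_mul, abs_mul, abs_of_nonneg (hKnn y)]
      rw [this]
      have h2 : |u y - A m y| ≤ M * h ^ 2 := by
        have : |u y - A m y| = |A m y - u y| := abs_sub_comm _ _
        rw [this]
        simpa [hA] using hinterp
      exact mul_le_mul_of_nonneg_right h2 (hKnn y)
  -- sums
  have hsumU : ∑ m ∈ Finset.range N, (∫ y in X m..X (m + 1), u y * K y)
      = ∫ y in a..b, u y * K y := by
    rw [intervalIntegral.sum_integral_adjacent_intervals (fun k hk => hII_u k hk), hX0, hXN]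
  have hsumL : ∑ m ∈ Finset.range N, (∫ y in X m..X (m + 1), uL y * K y)
      = ∫ y in a..b, uL y * K y := by
    rw [intervalIntegral.sum_integral_adjacent_intervals (fun k hk => hII_uL k hk), hX0, hXN]
  have hsumK : ∑ m ∈ Finset.range N, (∫ y in X m..X (m + 1), K y)
      = ∫ y in a..b, K y := by
    rw [intervalIntegral.sum_integral_adjacent_intervals (fun k hk => hKint _ _), hX0, hXN]
  -- kernel integral bound
  have hKW : (∫ y in a..b, K y) ≤ W := by
    have h1 : (∫ y in a..b, K y) ≤ ∫ y in (c - d)..(c + d), K y := by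
      apply intervalIntegral.integral_mono_interval (by linarith [hci.2, hd0])
        hab.le (by linarith [hci.1, hd0])
      · exact Filter.Eventually.of_forall (fun y => hKnn y)
      · exact hKint _ _
    have h2 : (∫ y in (c - d)..(c + d), K y) = W := by
      rw [hW, hK]
      have := intervalIntegral.integral_comp_sub_left (a := c - d) (b := c + d)
        (fun s : ℝ => |s| ^ (-γ)) c
      rw [this]
      norm_num
    linarith
  -- final chain
  calc |(∫ y in a..b, u y * K y) - ∫ y in a..b, uL y * K y|
      = |∑ m ∈ Finset.range N, ((∫ y in X m..X (m + 1), u y * K y)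
          - ∫ y in X m..X (m + 1), uL y * K y)| := by
        rw [Finset.sum_sub_distrib, hsumU, hsumL]
    _ ≤ ∑ m ∈ Finset.range N, |(∫ y in X m..X (m + 1), u y * K y)
          - ∫ y in X m..X (m + 1), uL y * K y| := Finset.abs_sum_le_sum_abs _ _
    _ ≤ ∑ m ∈ Finset.range N, M * h ^ 2 * ∫ y in X m..X (m + 1), K y := by
        apply Finset.sum_le_sum
        intro m hm
        exact hpiece m (Finset.mem_range.1 hm)
    _ = M * h ^ 2 * ∫ y in a..b, K y := by rw [← Finset.mul_sum, hsumK]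
    _ ≤ M * h ^ 2 * W := by
        apply mul_le_mul_of_nonneg_left hKW (by positivity)
    _ ≤ (M + 1) * (W + 1) * h ^ 2 := by nlinarith [sq_nonneg h]
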